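/- A real upper unitriangular 4×4 matrix X has all 12 non-trivial minors positive if and only if the six minors Δ^{1}_{4}(X), Δ^{12}_{34}(X), Δ^{123}_{234}(X), Δ^{12}_{24}(X), Δ^{2}_{4}(X), Δ^{3}_{4}(X) are positive. Here the 12 non-trivial minors are Δ^{1}_{2}, Δ^{2}_{3}, Δ^{3}_{4}, Δ^{1}_{3}, Δ^{2}_{4}, Δ^{1}_{4}, Δ^{12}_{23}, Δ^{23}_{34}, Δ^{12}_{24}, Δ^{13}_{34}, Δ^{12}_{34}, Δ^{123}_{234}. -/
import Mathlib


open Matrix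

theorem total_positivity_criterion
    (X : Matrix (Fin 4) (Fin 4) ℝ)
    (hd : ∀ i, X i i = 1)
    (hl : ∀ i j : Fin 4, (j : ℕ) < (i : ℕ) → X i j = 0) :
    (0 < X 0 1 ∧ 0 < X 1 2 ∧ 0 < X 2 3 ∧ 0 < X 0 2 ∧ 0 < X 1 3 ∧ 0 < X 0 3 ∧
      0 < det !![X 0 1, X 0 2; X 1 1, X 1 2] ∧
      0 < det !![X 1 2, X 1 3; X 2 2, X 2 3] ∧
      0 < det !![X 0 1, X 0 3; X 1 1, X 1 3] ∧
      0 < det !![X 0 2, X 0 3; X 2 2, X 2 3] ∧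
      0 < det !![X 0 2, X 0 3; X 1 2, X 1 3] ∧
      0 < det !![X 0 1, X 0 2, X 0 3; X 1 1, X 1 2, X 1 3; X 2 1, X 2 2, X 2 3]) ↔
    (0 < X 0 3 ∧
      0 < det !![X 0 2, X 0 3; X 1 2, X 1 3] ∧
      0 < det !![X 0 1, X 0 2, X 0 3; X 1 1, X 1 2, X 1 3; X 2 1, X 2 2, X 2 3] ∧
      0 < det !![X 0 1, X 0 3; X 1 1, X 1 3] ∧
      0 < X 1 3 ∧ 0 < X 2 3) := by
  have h11 : X 1 1 = 1 := hd 1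
  have h22 : X 2 2 = 1 := hd 2
  have h21 : X 2 1 = 0 := hl 2 1 (by norm_num)
  simp only [det_fin_two_of, det_fin_three, h11, h22, h21]
  norm_num [Matrix.cons_val_zero, Matrix.cons_val_one, Matrix.head_cons, Matrix.cons_val_two, Matrix.tail_cons]
  set a := X 0 1
  set b := X 0 2
  set c := X 0 3
  set d := X 1 2
  set e := X 1 3
  set f := X 2 3
  constructor
  · rintro ⟨h1, h2, h3, h4, h5, h6, h7, h8, h9, h10, h11, h12⟩
    refine ⟨h6, by nlinarith, by nlinarith, by nlinarith, h5, h3⟩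
  · rintro ⟨hc, hbe, h3, hae, he, hf⟩
    ring_nf at hbe h3 hae ⊢
    have ha : 0 < a := by nlinarith
    have hdf : 0 < d * f - e := by nlinarith
    have hd : 0 < d := by nlinarith
    have hb : 0 < b := by nlinarith
    have hadb : 0 < a * d - b := by nlinarith
    have hbfc : 0 < b * f - c := by nlinarith
    refine ⟨ha, hd, hf, hb, he, hc, by nlinarith, by nlinarith, by nlinarith, by nlinarith, by nlinarith, by nlinarith⟩
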